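/- Let (M_p)_{p≥0} be a sequence of positive reals with M_0 = M_1 = 1 satisfying (M_p/p!)^2 ≤ (M_{p-1}/(p-1)!)·(M_{p+1}/(p+1)!) for all p ≥ 1. Then for all multi-indices α, β ∈ ℕ^d with β ≤ α (componentwise) and 1 ≤ |β| ≤ |α| − 1, the inequality binomial(α, β)·M_{|α−β|}·M_{|β|} ≤ |α|·M_{|α|−1} holds. -/

import Mathlib

theorem aux_choose_mul_choose_le (m n i j : ℕ) :
    m.choose i * n.choose j ≤ (m + n).choose (i + j) := by
  rw [Nat.add_choose_eq]
  exact Finset.single_le_sum (f := fun ij : ℕ × ℕ => m.choose ij.1 * n.choose ij.2)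
    (fun _ _ => Nat.zero_le _) (by simp : ((i, j) : ℕ × ℕ) ∈ Finset.HasAntidiagonal.antidiagonal (i + j))

theorem aux_prod_choose_le {ι : Type*} (s : Finset ι) (f g : ι → ℕ) :
    ∏ i ∈ s, (f i).choose (g i) ≤ (∑ i ∈ s, f i).choose (∑ i ∈ s, g i) := by
  induction s using Finset.cons_induction with
  | empty => simp
  | cons a s ha ih =>
    simp only [Finset.prod_cons, Finset.sum_cons]
    calc (f a).choose (g a) * ∏ i ∈ s, (f i).choose (g i)
        ≤ (f a).choose (g a) * (∑ i ∈ s, f i).choose (∑ i ∈ s, g i) :=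
          Nat.mul_le_mul_left _ ih
      _ ≤ _ := aux_choose_mul_choose_le _ _ _ _

theorem stmt_1 (d : ℕ) (M : ℕ → ℝ) (hpos : ∀ p, 0 < M p) (h0 : M 0 = 1) (h1 : M 1 = 1)
    (hM4 : ∀ p : ℕ, 1 ≤ p →
      (M p / p.factorial) ^ 2 ≤
        (M (p - 1) / (p - 1).factorial) * (M (p + 1) / (p + 1).factorial))
    (α β : Fin d → ℕ) (hβα : β ≤ α)
    (h1β : 1 ≤ ∑ i, β i) (hβ : ∑ i, β i ≤ (∑ i, α i) - 1) :
    ((∏ i, (α i).choose (β i) : ℕ) : ℝ) * M (∑ i, (α i - β i)) * M (∑ i, β i) ≤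
      ((∑ i, α i : ℕ) : ℝ) * M ((∑ i, α i) - 1) := by
  set m : ℕ → ℝ := fun p => M p / p.factorial with hm
  have hmpos : ∀ p, 0 < m p := fun p =>
    div_pos (hpos p) (by exact_mod_cast Nat.factorial_pos p)
  have hm1 : m 1 = 1 := by simp [hm, h1]
  -- log-convexity
  have hconv : ∀ p, m (p + 1) ^ 2 ≤ m p * m (p + 2) := by
    intro p
    have := hM4 (p + 1) (by omega)
    simpa using this
  -- ratio monotone
  have hr : Monotone (fun p => m (p + 1) / m p) := by
    apply monotone_nat_of_le_succ
    intro p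
    rw [div_le_div_iff₀ (hmpos p) (hmpos (p + 1))]
    have := hconv p
    nlinarith [hmpos p, hmpos (p + 1), hmpos (p + 2)]
  have step : ∀ a b : ℕ, a ≤ b → m (a + 1) * m (b + 1) ≤ m a * m (b + 2) := by
    intro a b hab
    have := hr (show a ≤ b + 1 by omega)
    rw [div_le_div_iff₀ (hmpos a) (hmpos (b + 1))] at this
    nlinarith [hmpos a, hmpos (b + 1)]
  have key : ∀ a : ℕ, ∀ b : ℕ, a ≤ b → m (a + 1) * m (b + 1) ≤ m 1 * m (a + b + 1) := by
    intro a
    induction a with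
    | zero => intro b _; simp
    | succ a ih =>
      intro b hab
      calc m (a + 1 + 1) * m (b + 1) ≤ m (a + 1) * m (b + 2) := step (a + 1) b hab
        _ ≤ m 1 * m (a + (b + 1) + 1) := ih (b + 1) (by omega)
        _ = m 1 * m (a + 1 + b + 1) := by ring_nf
  set n : ℕ := ∑ i, α i with hn
  set k : ℕ := ∑ i, β i with hk
  have hkn : k ≤ n := Finset.sum_le_sum fun i _ => hβα i
  have hsub : ∑ i, (α i - β i) = n - k := Finset.sum_tsub_distrib Finset.univ fun i _ => hβα i
  have hk1 : 1 ≤ k := h1β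
  have hn2 : k + 1 ≤ n := by omega
  -- central inequality  m k * m (n-k) ≤ m 1 * m (n-1)
  have central : m (n - k) * m k ≤ m 1 * m (n - 1) := by
    rcases le_total k (n - k) with h | h
    · obtain ⟨a, ha⟩ : ∃ a, k = a + 1 := ⟨k - 1, by omega⟩
      obtain ⟨b, hb⟩ : ∃ b, n - k = b + 1 := ⟨n - k - 1, by omega⟩
      have hab : a ≤ b := by omega
      have hnn : a + b + 1 = n - 1 := by omega
      rw [hb, ha, mul_comm, ← hnn]
      exact key a b hab
    · have hnk1 : 1 ≤ n - k := by omega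
      obtain ⟨a, ha⟩ : ∃ a, n - k = a + 1 := ⟨n - k - 1, by omega⟩
      obtain ⟨b, hb⟩ : ∃ b, k = b + 1 := ⟨k - 1, by omega⟩
      have hab : a ≤ b := by omega
      have hnn : a + b + 1 = n - 1 := by omega
      rw [ha, hb, ← hnn]
      exact key a b hab
  -- translate back to M
  have hMm : ∀ p : ℕ, M p = m p * p.factorial := by
    intro p
    rw [hm]
    field_simp
  have hC : ((∏ i, (α i).choose (β i) : ℕ) : ℝ) ≤ (n.choose k : ℝ) := by
    exact_mod_cast aux_prod_choose_le Finset.univ α β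
  have hfac : ((n.choose k : ℕ) : ℝ) * (k.factorial : ℝ) * ((n - k).factorial : ℝ)
      = (n.factorial : ℝ) := by
    exact_mod_cast congrArg (Nat.cast : ℕ → ℝ)
      (Nat.choose_mul_factorial_mul_factorial hkn)
  have hnfac : (n.factorial : ℝ) = (n : ℝ) * ((n - 1).factorial : ℝ) := by
    exact_mod_cast congrArg (Nat.cast : ℕ → ℝ) (Nat.mul_factorial_pred (by omega)).symm
  have hMpos' := hpos
  calc ((∏ i, (α i).choose (β i) : ℕ) : ℝ) * M (∑ i, (α i - β i)) * M (∑ i, β i)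
      = ((∏ i, (α i).choose (β i) : ℕ) : ℝ) * M (n - k) * M k := by rw [hsub]
    _ ≤ (n.choose k : ℝ) * M (n - k) * M k := by
        apply mul_le_mul_of_nonneg_right _ (hpos k).le
        exact mul_le_mul_of_nonneg_right hC (hpos (n - k)).le
    _ = ((n.choose k : ℝ) * (k.factorial : ℝ) * ((n - k).factorial : ℝ))
          * (m (n - k) * m k) := by
        rw [hMm (n - k), hMm k]; ring
    _ = (n.factorial : ℝ) * (m (n - k) * m k) := by rw [hfac]
    _ ≤ (n.factorial : ℝ) * (m 1 * m (n - 1)) := by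
        apply mul_le_mul_of_nonneg_left central
        positivity
    _ = (n : ℝ) * M (n - 1) := by
        rw [hm1, one_mul, hnfac, hMm (n - 1)]
        ring
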